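/- Let (U, Z) be random variables with Z independent of U given L, and suppose the conditional density factorizes additively: p_{A|Z,U,L}(a | z, u, l) = b_a(u, l) + c_a(z, l). Then for any bounded measurable function π(z, l), E[ (π(Z,L) − E[π(Z,L)|L]) · p_{A|Z,U,L}(a|Z,U,L) | U, L ] = E[ (π(Z,L) − E[π(Z,L)|L]) · c_a(Z,L) | L ], which does not depend on U. Consequently the weighting function ω_{a,π}(U,L) := (p_{A|U,L}(a|U,L)/p_{A|L}(a|L)) · (E[π|A=a,U,L] − E[π|L]) / (E[π|A=a,L] − E[π|L]) is identically equal to 1 whenever the denominator is nonzero. -/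

import Mathlib

open MeasureTheory

/-- One direction of the AIV characterization.  Here `ν` is the conditional law of `Z`
given `L = l` (by `Z ⟂ U | L` it does not depend on `u`), `ρ` is the conditional law of
`U` given `L = l`, and the conditional treatment density is additive:
`p_{A|Z,U,L}(a|z,u,l) = b u + c z`.  Then the centered-`π` weighted conditional density
does not depend on `u`, and the weight `ω_{a,π}(u,l)` is identically `1` whenever the
relevant denominators are nonzero. -/
theorem additive_IV_implies_omega_one
    {𝒵 𝒰 : Type*} [MeasurableSpace 𝒵] [MeasurableSpace 𝒰]
    (ν : Measure 𝒵) [IsProbabilityMeasure ν] (ρ : Measure 𝒰) [IsProbabilityMeasure ρ]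
    (b : 𝒰 → ℝ) (c : 𝒵 → ℝ) (π : 𝒵 → ℝ)
    (hπ : Integrable π ν) (hπbdd : ∃ M : ℝ, ∀ z, |π z| ≤ M)
    (hc : Integrable c ν) (hπc : Integrable (fun z => π z * c z) ν)
    (hb : Integrable b ρ) :
    (∀ u : 𝒰,
      ∫ z, (π z - ∫ z', π z' ∂ν) * (b u + c z) ∂ν
        = ∫ z, (π z - ∫ z', π z' ∂ν) * c z ∂ν) ∧
    (∀ u : 𝒰,
      (∫ z, (b u + c z) ∂ν) ≠ 0 →
      (∫ u', ∫ z, (b u' + c z) ∂ν ∂ρ) ≠ 0 →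
      (∫ z, (π z - ∫ z', π z' ∂ν) * c z ∂ν) ≠ 0 →
      -- ω_{a,π}(u,l) = (p_{A|U,L}/p_{A|L}) · (E[π|A=a,U,L] − E[π|L]) / (E[π|A=a,L] − E[π|L])
      ((∫ z, (b u + c z) ∂ν) / (∫ u', ∫ z, (b u' + c z) ∂ν ∂ρ)) *
        ((∫ z, π z * (b u + c z) ∂ν) / (∫ z, (b u + c z) ∂ν) - ∫ z, π z ∂ν) /
        ((∫ u', ∫ z, π z * (b u' + c z) ∂ν ∂ρ) / (∫ u', ∫ z, (b u' + c z) ∂ν ∂ρ)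
          - ∫ z, π z ∂ν) = 1) := by
  set m := ∫ z, π z ∂ν with hm
  set C := ∫ z, c z ∂ν with hC
  set P := ∫ z, π z * c z ∂ν with hP
  set B := ∫ u', b u' ∂ρ with hB
  -- basic inner-integral identities
  have h1 : ∀ u, ∫ z, (b u + c z) ∂ν = b u + C := by
    intro u
    rw [integral_add (integrable_const _) hc, integral_const]
    simp [hC]
  have h2 : ∀ u, ∫ z, π z * (b u + c z) ∂ν = b u * m + P := by
    intro u
    have : (fun z => π z * (b u + c z)) = fun z => b u * π z + π z * c z := by
      funext z; ring
    rw [this, integral_add (hπ.const_mul _) hπc, integral_const_mul]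
  have hK : ∫ z, (π z - m) * c z ∂ν = P - m * C := by
    have : (fun z => (π z - m) * c z) = fun z => π z * c z - m * c z := by
      funext z; ring
    rw [this, integral_sub hπc (hc.const_mul m), integral_const_mul]
  constructor
  · intro u
    have expand : (fun z => (π z - m) * (b u + c z))
        = fun z => b u * (π z - m) + (π z - m) * c z := by
      funext z; ring
    have hπm : Integrable (fun z => π z - m) ν := hπ.sub (integrable_const m)
    have hπmc : Integrable (fun z => (π z - m) * c z) ν := by
      have : (fun z => (π z - m) * c z) = fun z => π z * c z - m * c z := by
        funext z; ring
      rw [this]; exact hπc.sub (hc.const_mul m)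
    rw [expand, integral_add (hπm.const_mul _) hπmc, integral_const_mul,
      integral_sub hπ (integrable_const m), integral_const]
    simp [hm]
  · intro u hne1 hne2 hne3
    rw [hK] at hne3
    have h3 : ∫ u', (b u' + C) ∂ρ = B + C := by
      rw [integral_add hb (integrable_const _), integral_const]; simp [hB]
    have h4 : ∫ u', (b u' * m + P) ∂ρ = B * m + P := by
      rw [integral_add (hb.mul_const m) (integrable_const _), integral_const,
        integral_mul_const]; simp [hB]
    rw [h1 u] at hne1
    simp only [h1, h2, h3, h4] at hne2 ⊢
    have e1 : (b u * m + P) / (b u + C) - m = (P - m * C) / (b u + C) := by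
      field_simp; ring
    have e2 : (B * m + P) / (B + C) - m = (P - m * C) / (B + C) := by
      field_simp; ring
    rw [e1, e2]
    field_simp
    exact div_self (by rwa [mul_comm C m])
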